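/- Aut_e(X₁) for X₁ = ({a,b}, {{a,b}}) equals the group of order 2 generated by the transposition (a b); hence, by induction using that each kernel ker(π_r : Aut_e(X_{r+1}) → Aut_e(X_r)) is generated by transpositions with disjoint supports in a ternary graph (so is an elementary abelian 2-group), each Aut_e(X_r) is a 2-group. -/

import Mathlib

/-- Vertices of the subgraph `X_{r+1}` of `X` of paths of length `≤ r+1` through the
edge `e = {a,b}` (indexing shifted by one: `Vset X a b 0` is the vertex set of `X₁`). -/
def Vset {V : Type*} (X : SimpleGraph V) (a b : V) : ℕ → Set V
  | 0 => {a, b}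
  | r + 1 => Vset X a b r ∪ {y | ∃ x ∈ Vset X a b r, X.Adj x y}

/-- Edges of the subgraph `X_{r+1}` (indexing shifted by one as in `Vset`). -/
def Eset {V : Type*} (X : SimpleGraph V) (a b : V) : ℕ → Set (Sym2 V)
  | 0 => {s(a, b)}
  | r + 1 => Eset X a b r ∪ {e | ∃ x y : V, e = s(x, y) ∧ X.Adj x y ∧ x ∈ Vset X a b r}

/-- The automorphisms of the graph `X_{r+1}` fixing the edge `{a,b}` setwise. -/
def AutE {V : Type*} (X : SimpleGraph V) (a b : V) (r : ℕ) :
    Set (Equiv.Perm {v : V // v ∈ Vset X a b r}) :=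
  {σ | (∀ x y : {v : V // v ∈ Vset X a b r},
          s(x.1, y.1) ∈ Eset X a b r ↔ s((σ x).1, (σ y).1) ∈ Eset X a b r) ∧
       ∀ (ha : a ∈ Vset X a b r) (hb : b ∈ Vset X a b r),
          s((σ ⟨a, ha⟩).1, (σ ⟨b, hb⟩).1) = s(a, b)}

set_option linter.unusedSectionVars false
set_option linter.unnecessarySimpa false
set_option linter.unusedVariables false

section Aux
variable {V : Type*} [Fintype V] [DecidableEq V] {X : SimpleGraph V} {a b : V}
variable {V : Type*} [Fintype V] [DecidableEq V] {X : SimpleGraph V} {a b : V}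

lemma Vset_succ (r : ℕ) : Vset X a b (r+1) = Vset X a b r ∪ {y | ∃ x ∈ Vset X a b r, X.Adj x y} := rfl

lemma Vset_le_succ (r : ℕ) : Vset X a b r ⊆ Vset X a b (r+1) := Set.subset_union_left

lemma Vset_mono : ∀ {r s : ℕ}, r ≤ s → Vset X a b r ⊆ Vset X a b s := by
  intro r s h
  induction s with
  | zero => simpa [Nat.le_zero.mp h] using subset_rfl
  | succ n ih =>
    rcases Nat.lt_or_ge r (n+1) with h' | h'
    · exact (ih (Nat.lt_succ_iff.mp h')).trans (Vset_le_succ n)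
    · have : r = n + 1 := le_antisymm h h'
      simp [this]

lemma a_mem (X : SimpleGraph V) (a b : V) (r : ℕ) : a ∈ Vset X a b r :=
  Vset_mono (Nat.zero_le r) (by simp [Vset])

lemma b_mem (X : SimpleGraph V) (a b : V) (r : ℕ) : b ∈ Vset X a b r :=
  Vset_mono (Nat.zero_le r) (by simp [Vset])

lemma adj_of_mem_Eset (hab : X.Adj a b) : ∀ {r : ℕ} {x y : V},
    s(x, y) ∈ Eset X a b r → X.Adj x y := by
  intro r
  induction r with
  | zero =>
    intro x y h
    simp only [Eset, Set.mem_singleton_iff, Sym2.eq_iff] at h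
    rcases h with ⟨rfl, rfl⟩ | ⟨rfl, rfl⟩
    · exact hab
    · exact hab.symm
  | succ n ih =>
    intro x y h
    rcases h with h | ⟨x', y', hxy, hadj, _⟩
    · exact ih h
    · rw [Sym2.eq_iff] at hxy
      rcases hxy with ⟨rfl, rfl⟩ | ⟨rfl, rfl⟩
      · exact hadj
      · exact hadj.symm

lemma mem_Eset_succ {r : ℕ} {x y : V} (hadj : X.Adj x y) (hx : x ∈ Vset X a b r) :
    s(x, y) ∈ Eset X a b (r+1) := Or.inr ⟨x, y, rfl, hadj, hx⟩

lemma mem_Eset_iff (hab : X.Adj a b) : ∀ {r : ℕ} {x y : V},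
    s(x, y) ∈ Eset X a b r ↔
      s(x, y) = s(a, b) ∨ (X.Adj x y ∧ ∃ t, t < r ∧ (x ∈ Vset X a b t ∨ y ∈ Vset X a b t)) := by
  intro r
  induction r with
  | zero =>
    intro x y
    simp [Eset]
  | succ n ih =>
    intro x y
    constructor
    · rintro (h | ⟨x', y', hxy, hadj, hx'⟩)
      · rcases ih.mp h with h' | ⟨hadj, t, ht, hmem⟩
        · exact Or.inl h'
        · exact Or.inr ⟨hadj, t, ht.trans (Nat.lt_succ_self n), hmem⟩
      · rw [Sym2.eq_iff] at hxy
        rcases hxy with ⟨rfl, rfl⟩ | ⟨rfl, rfl⟩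
        · exact Or.inr ⟨hadj, n, Nat.lt_succ_self n, Or.inl hx'⟩
        · exact Or.inr ⟨hadj.symm, n, Nat.lt_succ_self n, Or.inr hx'⟩
    · rintro (h | ⟨hadj, t, ht, hmem⟩)
      · exact Or.inl (ih.mpr (Or.inl h))
      · have htn : t ≤ n := Nat.lt_succ_iff.mp ht
        rcases hmem with hx | hy
        · exact mem_Eset_succ hadj (Vset_mono htn hx)
        · exact Sym2.eq_swap ▸ mem_Eset_succ hadj.symm (Vset_mono htn hy)

lemma one_mem_AutE (r : ℕ) : (1 : Equiv.Perm {v : V // v ∈ Vset X a b r}) ∈ AutE X a b r :=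
  ⟨fun x y => Iff.rfl, fun ha hb => rfl⟩

/-- From condition 2: `σ` either fixes `a,b` or swaps them. -/
lemma AutE.ab_cases {r : ℕ} {σ : Equiv.Perm {v : V // v ∈ Vset X a b r}}
    (hσ : σ ∈ AutE X a b r) :
    (σ ⟨a, a_mem X a b r⟩ = ⟨a, a_mem X a b r⟩ ∧ σ ⟨b, b_mem X a b r⟩ = ⟨b, b_mem X a b r⟩) ∨
    (σ ⟨a, a_mem X a b r⟩ = ⟨b, b_mem X a b r⟩ ∧ σ ⟨b, b_mem X a b r⟩ = ⟨a, a_mem X a b r⟩) := by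
  have h := hσ.2 (a_mem X a b r) (b_mem X a b r)
  rw [Sym2.eq_iff] at h
  rcases h with ⟨h1, h2⟩ | ⟨h1, h2⟩
  · exact Or.inl ⟨Subtype.ext h1, Subtype.ext h2⟩
  · exact Or.inr ⟨Subtype.ext h1, Subtype.ext h2⟩

lemma mul_mem_AutE {r : ℕ} {σ τ : Equiv.Perm {v : V // v ∈ Vset X a b r}}
    (hσ : σ ∈ AutE X a b r) (hτ : τ ∈ AutE X a b r) : σ * τ ∈ AutE X a b r := by
  constructor
  · intro x y
    exact (hτ.1 x y).trans (hσ.1 (τ x) (τ y))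
  · intro ha hb
    show s((σ (τ ⟨a, ha⟩)).1, (σ (τ ⟨b, hb⟩)).1) = s(a, b)
    have ea : (⟨a, ha⟩ : {v : V // v ∈ Vset X a b r}) = ⟨a, a_mem X a b r⟩ := rfl
    have eb : (⟨b, hb⟩ : {v : V // v ∈ Vset X a b r}) = ⟨b, b_mem X a b r⟩ := rfl
    rw [ea, eb]
    rcases AutE.ab_cases hτ with ⟨h1, h2⟩ | ⟨h1, h2⟩ <;> rw [h1, h2]
    · exact hσ.2 _ _
    · exact Sym2.eq_swap.trans (hσ.2 _ _)

lemma inv_mem_AutE {r : ℕ} {σ : Equiv.Perm {v : V // v ∈ Vset X a b r}}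
    (hσ : σ ∈ AutE X a b r) : σ⁻¹ ∈ AutE X a b r := by
  constructor
  · intro x y
    have := hσ.1 (σ⁻¹ x) (σ⁻¹ y)
    simpa using this.symm
  · intro ha hb
    have ea : (⟨a, ha⟩ : {v : V // v ∈ Vset X a b r}) = ⟨a, a_mem X a b r⟩ := rfl
    have eb : (⟨b, hb⟩ : {v : V // v ∈ Vset X a b r}) = ⟨b, b_mem X a b r⟩ := rfl
    rw [ea, eb]
    rcases AutE.ab_cases hσ with ⟨h1, h2⟩ | ⟨h1, h2⟩
    · have i1 : σ⁻¹ ⟨a, a_mem X a b r⟩ = ⟨a, a_mem X a b r⟩ := σ.injective (by rw [← Equiv.Perm.mul_apply, mul_inv_cancel, Equiv.Perm.one_apply, h1])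
      have i2 : σ⁻¹ ⟨b, b_mem X a b r⟩ = ⟨b, b_mem X a b r⟩ := σ.injective (by rw [← Equiv.Perm.mul_apply, mul_inv_cancel, Equiv.Perm.one_apply, h2])
      rw [i1, i2]
    · have i1 : σ⁻¹ ⟨a, a_mem X a b r⟩ = ⟨b, b_mem X a b r⟩ := σ.injective (by rw [← Equiv.Perm.mul_apply, mul_inv_cancel, Equiv.Perm.one_apply, h2])
      have i2 : σ⁻¹ ⟨b, b_mem X a b r⟩ = ⟨a, a_mem X a b r⟩ := σ.injective (by rw [← Equiv.Perm.mul_apply, mul_inv_cancel, Equiv.Perm.one_apply, h1])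
      rw [i1, i2]
      exact Sym2.eq_swap.symm ▸ rfl

lemma pow_mem_AutE {r : ℕ} {σ : Equiv.Perm {v : V // v ∈ Vset X a b r}}
    (hσ : σ ∈ AutE X a b r) (k : ℕ) : σ ^ k ∈ AutE X a b r := by
  induction k with
  | zero => simpa using one_mem_AutE r
  | succ n ih => rw [pow_succ]; exact mul_mem_AutE ih hσ

/-- `σ ∈ AutE X a b (r+1)` maps each layer `Vset t` into itself. -/
lemma layer_mem (hab : X.Adj a b) {r : ℕ} {σ : Equiv.Perm {v : V // v ∈ Vset X a b (r+1)}}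
    (hσ : σ ∈ AutE X a b (r+1)) :
    ∀ (t : ℕ) (v : {v : V // v ∈ Vset X a b (r+1)}), v.1 ∈ Vset X a b t → (σ v).1 ∈ Vset X a b t := by
  intro t
  induction t with
  | zero =>
    intro v hv
    have hv' : v.1 = a ∨ v.1 = b := hv
    rcases AutE.ab_cases hσ with ⟨h1, h2⟩ | ⟨h1, h2⟩ <;>
    · rcases hv' with h | h
      · have : v = ⟨a, a_mem X a b (r+1)⟩ := Subtype.ext h
        rw [this, h1]
        first
          | exact Or.inl rfl
          | exact Or.inr rfl
      · have : v = ⟨b, b_mem X a b (r+1)⟩ := Subtype.ext h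
        rw [this, h2]
        first
          | exact Or.inl rfl
          | exact Or.inr rfl
  | succ t ih =>
    intro v hv
    rcases hv with hv | ⟨x, hx, hadj⟩
    · exact Vset_mono (Nat.le_succ t) (ih v hv)
    · -- x ∈ Vset t, X.Adj x v.1
      rcases Nat.lt_or_ge r t with h' | h'
      · -- r + 1 ≤ t + 1, so v.1 ∈ Vset t already
        have : v.1 ∈ Vset X a b t := Vset_mono h' v.2
        exact Vset_mono (Nat.le_succ t) (ih v this)
      · -- t ≤ r
        have hxr1 : x ∈ Vset X a b (r+1) := Vset_mono (Nat.le_succ_of_le h') hx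
        set x' : {v : V // v ∈ Vset X a b (r+1)} := ⟨x, hxr1⟩
        have hE : s(x'.1, v.1) ∈ Eset X a b (r+1) := mem_Eset_succ hadj (Vset_mono h' hx)
        have hE2 := (hσ.1 x' v).mp hE
        have hadj2 : X.Adj (σ x').1 (σ v).1 := adj_of_mem_Eset hab hE2
        exact Or.inr ⟨(σ x').1, ih x' hx, hadj2⟩

lemma layer_iff (hab : X.Adj a b) {r : ℕ} {σ : Equiv.Perm {v : V // v ∈ Vset X a b (r+1)}}
    (hσ : σ ∈ AutE X a b (r+1)) (t : ℕ) (v : {v : V // v ∈ Vset X a b (r+1)}) :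
    (σ v).1 ∈ Vset X a b t ↔ v.1 ∈ Vset X a b t := by
  constructor
  · intro h
    have := layer_mem hab (inv_mem_AutE hσ) t (σ v) h
    simpa using this
  · exact layer_mem hab hσ t v

/-- adjacency is preserved for pairs with one coordinate in `Vset r`. -/
lemma adj_iff (hab : X.Adj a b) {r : ℕ} {σ : Equiv.Perm {v : V // v ∈ Vset X a b (r+1)}}
    (hσ : σ ∈ AutE X a b (r+1)) {x y : {v : V // v ∈ Vset X a b (r+1)}}
    (hx : x.1 ∈ Vset X a b r) : X.Adj x.1 y.1 ↔ X.Adj (σ x).1 (σ y).1 := by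
  constructor
  · intro h
    exact adj_of_mem_Eset hab ((hσ.1 x y).mp (mem_Eset_succ h hx))
  · intro h
    have hσx : (σ x).1 ∈ Vset X a b r := (layer_iff hab hσ r x).mpr hx
    exact adj_of_mem_Eset hab ((hσ.1 x y).mpr (mem_Eset_succ h hσx))

lemma abpair_iff (hab : X.Adj a b) {r : ℕ} {σ : Equiv.Perm {v : V // v ∈ Vset X a b (r+1)}}
    (hσ : σ ∈ AutE X a b (r+1)) (x y : {v : V // v ∈ Vset X a b (r+1)}) :
    s(x.1, y.1) = s(a, b) ↔ s((σ x).1, (σ y).1) = s(a, b) := by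
  have key : ∀ (τ : Equiv.Perm {v : V // v ∈ Vset X a b (r+1)}), τ ∈ AutE X a b (r+1) →
      ∀ x y : {v : V // v ∈ Vset X a b (r+1)},
      s(x.1, y.1) = s(a, b) → s((τ x).1, (τ y).1) = s(a, b) := by
    intro τ hτ x y h
    rw [Sym2.eq_iff] at h
    rcases h with ⟨h1, h2⟩ | ⟨h1, h2⟩
    · have hx : x = ⟨a, a_mem X a b (r+1)⟩ := Subtype.ext h1
      have hy : y = ⟨b, b_mem X a b (r+1)⟩ := Subtype.ext h2
      rw [hx, hy]; exact hτ.2 _ _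
    · have hx : x = ⟨b, b_mem X a b (r+1)⟩ := Subtype.ext h1
      have hy : y = ⟨a, a_mem X a b (r+1)⟩ := Subtype.ext h2
      rw [hx, hy]
      exact Sym2.eq_swap.trans (hτ.2 _ _)
  constructor
  · exact key σ hσ x y
  · intro h
    have := key σ⁻¹ (inv_mem_AutE hσ) (σ x) (σ y) h
    simpa using this

noncomputable def resPerm {r : ℕ} (hab : X.Adj a b)
    (σ : Equiv.Perm {v : V // v ∈ Vset X a b (r+1)}) (hσ : σ ∈ AutE X a b (r+1)) :
    Equiv.Perm {v : V // v ∈ Vset X a b r} :=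
  Equiv.ofBijective
    (fun v => ⟨(σ ⟨v.1, Vset_mono (Nat.le_succ r) v.2⟩).1,
      layer_mem hab hσ r ⟨v.1, Vset_mono (Nat.le_succ r) v.2⟩ v.2⟩)
    (Finite.injective_iff_bijective.mp (by
      intro v w h
      have h' := Subtype.ext_iff.mp h
      have := σ.injective (Subtype.ext h')
      have h2 : v.1 = w.1 := Subtype.mk_eq_mk.mp this
      exact Subtype.ext h2))

lemma resPerm_apply {r : ℕ} (hab : X.Adj a b)
    {σ : Equiv.Perm {v : V // v ∈ Vset X a b (r+1)}} (hσ : σ ∈ AutE X a b (r+1))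
    (v : {v : V // v ∈ Vset X a b r}) :
    (resPerm hab σ hσ v).1 = (σ ⟨v.1, Vset_mono (Nat.le_succ r) v.2⟩).1 := rfl

lemma resPerm_mem {r : ℕ} (hab : X.Adj a b)
    {σ : Equiv.Perm {v : V // v ∈ Vset X a b (r+1)}} (hσ : σ ∈ AutE X a b (r+1)) :
    resPerm hab σ hσ ∈ AutE X a b r := by
  constructor
  · intro x y
    rw [mem_Eset_iff hab, mem_Eset_iff hab, resPerm_apply hab hσ, resPerm_apply hab hσ]
    set x' : {v : V // v ∈ Vset X a b (r+1)} := ⟨x.1, Vset_mono (Nat.le_succ r) x.2⟩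
    set y' : {v : V // v ∈ Vset X a b (r+1)} := ⟨y.1, Vset_mono (Nat.le_succ r) y.2⟩
    exact or_congr (abpair_iff hab hσ x' y')
      (and_congr (adj_iff hab hσ (x := x') (y := y') x.2)
        (exists_congr fun t => and_congr_right fun ht =>
          or_congr ((layer_iff hab hσ t x').symm) ((layer_iff hab hσ t y').symm)))
  · intro ha hb
    rw [resPerm_apply hab hσ, resPerm_apply hab hσ]
    exact hσ.2 _ _

lemma resPerm_pow {r : ℕ} (hab : X.Adj a b)
    {σ : Equiv.Perm {v : V // v ∈ Vset X a b (r+1)}} (hσ : σ ∈ AutE X a b (r+1))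
    (k : ℕ) (v : {v : V // v ∈ Vset X a b r}) :
    (((resPerm hab σ hσ) ^ k) v).1 = ((σ ^ k) ⟨v.1, Vset_mono (Nat.le_succ r) v.2⟩).1 := by
  induction k with
  | zero => simp
  | succ n ih =>
    rw [pow_succ', pow_succ']
    simp only [Equiv.Perm.mul_apply]
    rw [resPerm_apply hab hσ]
    exact congrArg (fun w => (σ w).1) (Subtype.ext ih)

/-- every vertex of `Vset r` has a neighbor in `Vset r`. -/
lemma exists_back (hab : X.Adj a b) : ∀ (r : ℕ) (x : V), x ∈ Vset X a b r →
    ∃ w ∈ Vset X a b r, X.Adj x w := by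
  intro r
  induction r with
  | zero =>
    intro x hx
    rcases hx with h | h
    · subst h; exact ⟨b, Or.inr rfl, hab⟩
    · rcases h with rfl
      exact ⟨a, Or.inl rfl, hab.symm⟩
  | succ n ih =>
    intro x hx
    rcases hx with hx | ⟨x0, hx0, hadj⟩
    · obtain ⟨w, hw, hadj⟩ := ih x hx
      exact ⟨w, Vset_mono (Nat.le_succ n) hw, hadj⟩
    · exact ⟨x0, Vset_mono (Nat.le_succ n) hx0, hadj.symm⟩

lemma kernel_sq (hab : X.Adj a b) (htern : ∀ v : V, (X.neighborSet v).ncard ≤ 3) {r : ℕ}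
    {τ : Equiv.Perm {v : V // v ∈ Vset X a b (r+1)}} (hτ : τ ∈ AutE X a b (r+1))
    (hfix : ∀ v : {v : V // v ∈ Vset X a b (r+1)}, v.1 ∈ Vset X a b r → τ v = v) :
    ∀ v, τ (τ v) = v := by
  intro v
  by_cases hv : v.1 ∈ Vset X a b r
  · rw [hfix v hv, hfix v hv]
  · rcases v.2 with hv' | ⟨x, hx, hadj⟩
    · exact absurd hv' hv
    obtain ⟨w, hw, hxw⟩ := exists_back hab r x hx
    set S : Set V := X.neighborSet x \ Vset X a b r with hS
    have hcard : S.ncard ≤ 2 := by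
      have h1 : S ⊆ X.neighborSet x \ {w} := by
        intro z hz
        exact ⟨hz.1, fun h => hz.2 (h ▸ hw)⟩
      have h2 : (X.neighborSet x \ {w}).ncard = (X.neighborSet x).ncard - 1 :=
        Set.ncard_diff_singleton_of_mem hxw
      have h3 := htern x
      have h4 : S.ncard ≤ (X.neighborSet x \ {w}).ncard :=
        Set.ncard_le_ncard h1 (Set.toFinite _)
      omega
    have hx1 : x ∈ Vset X a b (r+1) := Vset_mono (Nat.le_succ r) hx
    set x' : {v : V // v ∈ Vset X a b (r+1)} := ⟨x, hx1⟩
    have hτx : τ x' = x' := hfix x' hx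
    have step : ∀ u : {v : V // v ∈ Vset X a b (r+1)}, u.1 ∈ S → (τ u).1 ∈ S := by
      intro u hu
      constructor
      · have h5 : X.Adj x'.1 u.1 := hu.1
        have h6 := (adj_iff hab hτ (x := x') (y := u) hx).mp h5
        rw [hτx] at h6
        exact h6
      · intro hmem
        exact hu.2 ((layer_iff hab hτ r u).mp hmem)
    have hvS : v.1 ∈ S := ⟨hadj, hv⟩
    have htvS : (τ v).1 ∈ S := step v hvS
    have httvS : (τ (τ v)).1 ∈ S := step (τ v) htvS
    by_cases h1 : τ v = v
    · rw [h1, h1]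
    by_contra h2
    have hv1 : v.1 ≠ (τ v).1 := fun h => h1 (Subtype.ext h.symm)
    have hv2 : v.1 ≠ (τ (τ v)).1 := fun h => h2 (Subtype.ext h.symm)
    have hv3 : (τ v).1 ≠ (τ (τ v)).1 := fun h => h1 (τ.injective (Subtype.ext h.symm))
    have hsub : ({v.1, (τ v).1, (τ (τ v)).1} : Set V) ⊆ S := by
      intro z hz
      rcases hz with rfl | rfl | rfl
      · exact hvS
      · exact htvS
      · exact httvS
    have h3 : ({v.1, (τ v).1, (τ (τ v)).1} : Set V).ncard = 3 :=
      Set.ncard_eq_three.mpr ⟨v.1, (τ v).1, (τ (τ v)).1, hv1, hv2, hv3, rfl⟩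
    have h4 : ({v.1, (τ v).1, (τ (τ v)).1} : Set V).ncard ≤ S.ncard :=
      Set.ncard_le_ncard hsub (Set.toFinite _)
    omega

lemma mem_zero_cases (v : {v : V // v ∈ Vset X a b 0}) :
    v = ⟨a, a_mem X a b 0⟩ ∨ v = ⟨b, b_mem X a b 0⟩ := by
  rcases v.2 with h | h
  · exact Or.inl (Subtype.ext h)
  · exact Or.inr (Subtype.ext h)

lemma AutE_zero (hab : X.Adj a b) :
    AutE X a b 0 =
      {1, Equiv.swap (⟨a, a_mem X a b 0⟩ : {v : V // v ∈ Vset X a b 0}) ⟨b, b_mem X a b 0⟩} := by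
  have hne : a ≠ b := hab.ne
  have hne' : (⟨a, a_mem X a b 0⟩ : {v : V // v ∈ Vset X a b 0}) ≠ ⟨b, b_mem X a b 0⟩ :=
    fun h => hne (Subtype.mk_eq_mk.mp h)
  ext σ
  constructor
  · intro hσ
    rcases AutE.ab_cases hσ with ⟨h1, h2⟩ | ⟨h1, h2⟩
    · left
      ext v
      rcases mem_zero_cases v with rfl | rfl
      · rw [h1]; rfl
      · rw [h2]; rfl
    · right
      ext v
      rcases mem_zero_cases v with rfl | rfl
      · rw [h1, Equiv.swap_apply_left]
      · rw [h2, Equiv.swap_apply_right]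
  · intro hσ
    rcases hσ with rfl | rfl
    · exact one_mem_AutE 0
    · constructor
      · intro x y
        rcases mem_zero_cases x with rfl | rfl <;> rcases mem_zero_cases y with rfl | rfl <;>
          simp [Eset, Equiv.swap_apply_left, Equiv.swap_apply_right, Sym2.eq_iff, hne,
            hne.symm, Sym2.eq_swap]
      · intro ha hb
        have ea : (⟨a, ha⟩ : {v : V // v ∈ Vset X a b 0}) = ⟨a, a_mem X a b 0⟩ := rfl
        have eb : (⟨b, hb⟩ : {v : V // v ∈ Vset X a b 0}) = ⟨b, b_mem X a b 0⟩ := rfl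
        rw [ea, eb, Equiv.swap_apply_left, Equiv.swap_apply_right]
        exact Sym2.eq_swap.symm ▸ rfl

lemma AutE_two_pow (hab : X.Adj a b) (htern : ∀ v : V, (X.neighborSet v).ncard ≤ 3) :
    ∀ (r : ℕ) (σ : Equiv.Perm {v : V // v ∈ Vset X a b r}), σ ∈ AutE X a b r →
      σ ^ (2 ^ (r + 1)) = 1 := by
  intro r
  induction r with
  | zero =>
    intro σ hσ
    rw [AutE_zero hab] at hσ
    rcases hσ with rfl | rfl
    · simp
    · rw [show (2:ℕ) ^ (0+1) = 2 from rfl, pow_two, Equiv.swap_mul_self]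
  | succ n ih =>
    intro σ hσ
    have hres := resPerm_mem hab hσ
    have hres1 : (resPerm hab σ hσ) ^ (2 ^ (n + 1)) = 1 := ih _ hres
    set τ := σ ^ (2 ^ (n + 1)) with hτdef
    have hτ : τ ∈ AutE X a b (n + 1) := pow_mem_AutE hσ _
    have hfix : ∀ v : {v : V // v ∈ Vset X a b (n+1)}, v.1 ∈ Vset X a b n → τ v = v := by
      intro v hv
      apply Subtype.ext
      have h := resPerm_pow hab hσ (2 ^ (n + 1)) ⟨v.1, hv⟩
      rw [hres1] at h
      exact h.symm
    have hsq := kernel_sq hab htern hτ hfix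
    have hτ2 : τ * τ = 1 := Equiv.ext fun v => hsq v
    have : (2 : ℕ) ^ (n + 1 + 1) = 2 ^ (n + 1) * 2 := by ring
    rw [this, pow_mul, pow_two, hτ2]

end Aux

theorem stmt17 {V : Type*} [Fintype V] [DecidableEq V] (X : SimpleGraph V)
    (hconn : X.Connected) (htern : ∀ v : V, (X.neighborSet v).ncard ≤ 3)
    (a b : V) (hab : X.Adj a b) :
    AutE X a b 0 =
      {1, Equiv.swap (⟨a, by simp [Vset]⟩ : {v : V // v ∈ Vset X a b 0})
        (⟨b, by simp [Vset]⟩ : {v : V // v ∈ Vset X a b 0})} ∧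
    ∀ r : ℕ, ∃ k : ℕ, (AutE X a b r).ncard = 2 ^ k := by
  constructor
  · exact AutE_zero hab
  · intro r
    let H : Subgroup (Equiv.Perm {v : V // v ∈ Vset X a b r}) :=
      { carrier := AutE X a b r
        mul_mem' := fun h h' => mul_mem_AutE h h'
        one_mem' := one_mem_AutE r
        inv_mem' := fun h => inv_mem_AutE h }
    have hp : IsPGroup 2 H := by
      intro g
      refine ⟨r + 1, ?_⟩
      apply Subtype.ext
      rw [SubmonoidClass.coe_pow, OneMemClass.coe_one]
      exact AutE_two_pow hab htern r g.1 g.2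
    obtain ⟨k, hk⟩ := (IsPGroup.iff_card (p := 2) (G := H)).mp hp
    refine ⟨k, ?_⟩
    rw [← Nat.card_coe_set_eq]
    exact hk
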